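/- Fix an integer p ≥ 3 and a real b > 1/(p−2). For U = (U₁,…,U_p) ∈ ℝ^p, let M_p(U) be the set of probability measures ∑_{i=1}^p c_i δ_{U_i} with all c_i > 0 and ∑_{i=1}^p c_i = 1. Then the set of U ∈ ℝ^p for which some measure of M_p(U) does not belong to the class C(1,2b) has p-dimensional Lebesgue measure zero; equivalently, for Lebesgue-almost every U ∈ ℝ^p, every probability measure ∑_{i=1}^p c_i δ_{U_i} with all c_i>0 belongs to C(1,2b). -/

import Mathlib

open MeasureTheory Real Set Filter

/-- The weak Cramer class `C(1,b)` for probability measures on `ℝ`: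
`|φ_μ(t)| ≤ 1 - C/|t|^b` for `|t|` large enough. -/
def memC1 (μ : Measure ℝ) (b : ℝ) : Prop :=
  ∃ C > (0 : ℝ), ∃ R > (0 : ℝ), ∀ t : ℝ, R < |t| →
    ‖∫ x, Complex.exp (t * x * Complex.I) ∂μ‖ ≤ 1 - C / |t| ^ b

lemma key_ineq (a c θ : ℝ) (ha : 0 < a) (hc : 0 < c) (hac : a + c ≤ 1) :
    ‖(a : ℂ) + c * Complex.exp (θ * Complex.I)‖ ≤ a + c - a * c * (1 - Real.cos θ) := by
  have h1 : (a : ℂ) + c * Complex.exp (θ * Complex.I)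
      = ((a + c * Real.cos θ : ℝ) : ℂ) + ((c * Real.sin θ : ℝ) : ℂ) * Complex.I := by
    rw [Complex.exp_mul_I, ← Complex.ofReal_cos, ← Complex.ofReal_sin]
    push_cast; ring
  rw [h1, Complex.norm_add_mul_I]
  have hcos1 : Real.cos θ ≤ 1 := Real.cos_le_one θ
  have hcos2 : -1 ≤ Real.cos θ := Real.neg_one_le_cos θ
  have hx0 : 0 ≤ a * c * (1 - Real.cos θ) := by
    apply mul_nonneg (by positivity); linarith
  have h2 : 4 * (a * c) ≤ (a + c) ^ 2 := by nlinarith [sq_nonneg (a - c)]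
  have h3 : (a + c) ^ 2 ≤ a + c := by nlinarith
  have hRHS : 0 ≤ a + c - a * c * (1 - Real.cos θ) := by nlinarith
  rw [show a + c - a * c * (1 - Real.cos θ) =
    Real.sqrt ((a + c - a * c * (1 - Real.cos θ))^2) from (Real.sqrt_sq hRHS).symm]
  apply Real.sqrt_le_sqrt
  have hsin2 : (c * Real.sin θ)^2 + (c * Real.cos θ)^2 = c^2 := by
    rw [mul_pow, mul_pow, ← mul_add, Real.sin_sq_add_cos_sq, mul_one]
  have hprod : 0 ≤ (a * c * (1 - Real.cos θ)) *
      (2 - 2*(a+c) + a * c * (1 - Real.cos θ)) := by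
    apply mul_nonneg hx0; nlinarith
  nlinarith [hsin2, hprod]

lemma one_sub_cos_lb (θ δ : ℝ) (hδ : 0 ≤ δ) (h : ∀ k : ℤ, δ ≤ |θ - 2 * π * k|) :
    2 * (δ / π) ^ 2 ≤ 1 - Real.cos θ := by
  have hπ : 0 < π := Real.pi_pos
  set k := round (θ / (2 * π)) with hk
  set r := θ - 2 * π * k with hr
  have hr2 : |r| ≤ π := by
    have h2 := abs_sub_round (θ / (2 * π))
    have : r = (2 * π) * (θ / (2 * π) - k) := by rw [hr]; field_simp
    rw [this, abs_mul, abs_of_pos (by positivity : (0:ℝ) < 2 * π)]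
    nlinarith [abs_nonneg (θ / (2 * π) - k)]
  have hδr : δ ≤ |r| := h k
  have hcosr : Real.cos r = Real.cos θ := by
    rw [hr, show 2 * π * (k:ℝ) = (k:ℝ) * (2 * π) by ring]
    exact Real.cos_sub_int_mul_two_pi θ k
  have hsin : Real.sin (r/2) ^ 2 = (1 - Real.cos r) / 2 := by
    rw [Real.sin_sq_eq_half_sub]
    rw [show 2 * (r/2) = r by ring]; ring
  have habs : Real.sin (r/2) ^ 2 = Real.sin (|r|/2) ^ 2 := by
    rcases abs_cases r with ⟨h1, _⟩ | ⟨h1, _⟩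
    · rw [h1]
    · rw [h1, show -r/2 = -(r/2) by ring, Real.sin_neg]; ring
  have hs : δ / π ≤ Real.sin (|r|/2) := by
    have := Real.mul_le_sin (x := |r|/2) (by positivity) (by linarith)
    calc δ / π ≤ |r| / π := by gcongr
    _ = 2 / π * (|r|/2) := by ring
    _ ≤ Real.sin (|r|/2) := this
  have : (δ / π) ^ 2 ≤ Real.sin (|r|/2) ^ 2 := by
    apply pow_le_pow_left₀ (by positivity) hs
  nlinarith [this, hsin, habs, hcosr]

lemma norm_char_le (m : ℕ) (c U : Fin (m+1) → ℝ) (hc : ∀ i, 0 < c i)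
    (hsum : ∑ i, c i = 1) (t : ℝ) (j : Fin m) :
    ‖∑ i, (c i : ℂ) * Complex.exp (t * U i * Complex.I)‖
      ≤ 1 - c 0 * c j.succ * (1 - Real.cos (t * (U j.succ - U 0))) := by
  set f : Fin (m+1) → ℂ := fun i => (c i : ℂ) * Complex.exp (t * U i * Complex.I) with hf
  have hne : (0 : Fin (m+1)) ≠ j.succ := (Fin.succ_ne_zero j).symm
  set s : Finset (Fin (m+1)) := {0, j.succ} with hs
  have hsub : s ⊆ Finset.univ := Finset.subset_univ s
  have hsplit : ∀ g : Fin (m+1) → ℝ, (∑ i, g i) = (∑ i ∈ Finset.univ \ s, g i) + (g 0 + g j.succ) := by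
    intro g
    rw [← Finset.sum_pair hne, Finset.sum_sdiff hsub]
  have hsplitC : (∑ i, f i) = (∑ i ∈ Finset.univ \ s, f i) + (f 0 + f j.succ) := by
    rw [← Finset.sum_pair hne, Finset.sum_sdiff hsub]
  have hnorm1 : ∀ i, ‖f i‖ = c i := by
    intro i
    rw [hf]
    simp only [norm_mul, Complex.norm_real, Complex.norm_exp]
    have : (↑t * ↑(U i) * Complex.I).re = 0 := by simp
    rw [this, Real.exp_zero, mul_one]
    simp [Real.norm_eq_abs, abs_of_pos (hc i)]
  have hkey : ‖f 0 + f j.succ‖ ≤ c 0 + c j.succ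
      - c 0 * c j.succ * (1 - Real.cos (t * (U j.succ - U 0))) := by
    have hexp : f 0 + f j.succ = Complex.exp (t * U 0 * Complex.I) *
        (((c 0 : ℝ) : ℂ) + (c j.succ : ℂ) * Complex.exp ((t * (U j.succ - U 0) : ℝ) * Complex.I)) := by
      simp only [hf]
      have hadd : ((t * (U j.succ - U 0) : ℝ) : ℂ) * Complex.I + ↑t * ↑(U 0) * Complex.I
          = ↑t * ↑(U j.succ) * Complex.I := by push_cast; ring
      have h2 : Complex.exp (((t * (U j.succ - U 0) : ℝ) : ℂ) * Complex.I)
          * Complex.exp (↑t * ↑(U 0) * Complex.I)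
          = Complex.exp (↑t * ↑(U j.succ) * Complex.I) := by
        rw [← Complex.exp_add, hadd]
      rw [← h2]; ring
    rw [hexp, norm_mul]
    have h1 : ‖Complex.exp (↑t * ↑(U 0) * Complex.I)‖ = 1 := by
      rw [Complex.norm_exp]
      have : (↑t * ↑(U 0) * Complex.I).re = 0 := by simp
      rw [this, Real.exp_zero]
    rw [h1, one_mul]
    have hac : c 0 + c j.succ ≤ 1 := by
      rw [hsplit c] at hsum
      have : 0 ≤ ∑ i ∈ Finset.univ \ s, c i :=
        Finset.sum_nonneg fun i _ => (hc i).le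
      linarith
    exact key_ineq (c 0) (c j.succ) _ (hc 0) (hc j.succ) hac
  calc ‖∑ i, f i‖ ≤ ‖∑ i ∈ Finset.univ \ s, f i‖ + ‖f 0 + f j.succ‖ := by
        rw [hsplitC]; exact norm_add_le _ _
    _ ≤ (∑ i ∈ Finset.univ \ s, c i) + (c 0 + c j.succ
        - c 0 * c j.succ * (1 - Real.cos (t * (U j.succ - U 0)))) := by
        exact add_le_add ((norm_sum_le _ _).trans (le_of_eq (by simp [hnorm1]))) hkey
    _ = 1 - c 0 * c j.succ * (1 - Real.cos (t * (U j.succ - U 0))) := by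
        rw [hsplit c] at hsum; linarith

lemma oneDim_bound (n : ℕ) (hn : 1 ≤ n) (L : ℕ) (hL : 1 ≤ L) (δ : ℝ) (hδ0 : 0 ≤ δ)
    (hδ1 : δ ≤ 1) :
    volume {x : ℝ | |x| ≤ L ∧ ∃ k : ℤ, |n * x - k| < δ} ≤ ENNReal.ofReal (10 * L * δ) := by
  have hnpos : (0:ℝ) < n := by exact_mod_cast hn
  have hLpos : (1:ℝ) ≤ L := by exact_mod_cast hL
  set K : ℤ := n * L + 1 with hK
  have hsub : {x : ℝ | |x| ≤ L ∧ ∃ k : ℤ, |n * x - k| < δ}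
      ⊆ ⋃ k ∈ Finset.Icc (-K) K, Metric.ball ((k : ℝ) / n) (δ / n) := by
    rintro x ⟨hx, k, hk⟩
    have hkb : k ∈ Finset.Icc (-K) K := by
      have h1 : |(k:ℝ)| ≤ (n:ℝ) * L + 1 := by
        have e1 : (k:ℝ) = n*x - (n*x - k) := by ring
        calc |(k:ℝ)| = |n*x - (n*x - (k:ℝ))| := by rw [← e1]
        _ ≤ |(n:ℝ)*x| + |(n:ℝ)*x - k| := abs_sub _ _
        _ ≤ (n:ℝ) * L + 1 := by
              rw [abs_mul, abs_of_pos hnpos]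
              nlinarith [hx]
      have h2 : |(k:ℝ)| ≤ (K:ℝ) := by rw [hK]; push_cast; linarith
      have h3 : |k| ≤ K := by exact_mod_cast h2
      rw [Finset.mem_Icc]
      constructor
      · linarith [neg_abs_le k]
      · linarith [le_abs_self k]
    refine Set.mem_biUnion hkb ?_
    rw [Metric.mem_ball, Real.dist_eq]
    have e2 : x - (k:ℝ)/n = ((n:ℝ) * x - k)/n := by field_simp
    rw [e2, abs_div, abs_of_pos hnpos]
    gcongr
  have hcard : (Finset.Icc (-K) K).card = 2*n*L+3 := by
    have e3 : K + 1 - -K = ((2*n*L+3 : ℕ) : ℤ) := by rw [hK]; push_cast; ring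
    rw [Int.card_Icc, e3, Int.toNat_natCast]
  calc volume {x : ℝ | |x| ≤ L ∧ ∃ k : ℤ, |n * x - k| < δ}
      ≤ ∑ k ∈ Finset.Icc (-K) K, volume (Metric.ball ((k : ℝ) / n) (δ / n)) :=
        (measure_mono hsub).trans (measure_biUnion_finset_le _ _)
    _ = (2*n*L+3 : ℕ) * ENNReal.ofReal (2 * (δ/n)) := by
        simp [Real.volume_ball, Finset.sum_const, hcard, nsmul_eq_mul]
    _ ≤ ENNReal.ofReal (10 * L * δ) := by
        rw [show ((2*n*L+3 : ℕ) : ENNReal) = ENNReal.ofReal ((2*n*L+3 : ℕ) : ℝ) by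
          rw [ENNReal.ofReal_natCast], ← ENNReal.ofReal_mul (by positivity)]
        apply ENNReal.ofReal_le_ofReal
        rw [show ((2*n*L+3 : ℕ):ℝ) * (2 * (δ/n)) = ((2*n*L+3 : ℕ):ℝ) * (2 * δ)/n by ring,
          div_le_iff₀ hnpos]
        push_cast
        nlinarith [mul_nonneg (mul_nonneg (sub_nonneg.2 (one_le_mul_of_one_le_of_one_le
          (by exact_mod_cast hn) hLpos : (1:ℝ) ≤ n * L)) hδ0) (by norm_num : (0:ℝ) ≤ 6)]

lemma ae_dioph_beta (q : ℕ) (hq : 1 ≤ q) (b' : ℝ) (hb'pos : 0 < b')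
    (hb'q : 1 < q * b') :
    ∀ᵐ β : Fin q → ℝ ∂volume, ∃ N : ℕ, 1 ≤ N ∧ ∀ n : ℤ, (N:ℝ) ≤ |(n:ℝ)| →
      ∃ i : Fin q, ∀ k : ℤ, |(n:ℝ)| ^ (-b') ≤ |(n:ℝ) * β i - (k:ℝ)| := by
  -- the frequent-approximation set has measure zero, for each box size L
  have hzero : ∀ L : ℕ, volume {β : Fin q → ℝ | ∃ᶠ n in atTop,
      ∀ i, |β i| ≤ ((L+1 : ℕ):ℝ) ∧ ∃ k : ℤ, |(n:ℕ) * β i - (k:ℝ)| < ((n:ℕ):ℝ) ^ (-b')} = 0 := by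
    intro L
    apply measure_setOf_frequently_eq_zero
    have hbd : ∀ n : ℕ, volume {β : Fin q → ℝ | ∀ i, |β i| ≤ ((L+1 : ℕ):ℝ)
        ∧ ∃ k : ℤ, |(n:ℕ) * β i - (k:ℝ)| < ((n:ℕ):ℝ) ^ (-b')}
        ≤ ENNReal.ofReal ((10 * (L+1 : ℕ)) ^ q * ((n:ℝ) ^ (b' * q))⁻¹) := by
      intro n
      set S : Set ℝ := {x : ℝ | |x| ≤ ((L+1:ℕ):ℝ) ∧ ∃ k : ℤ, |(n:ℕ) * x - (k:ℝ)| < ((n:ℕ):ℝ) ^ (-b')} with hS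
      have hset : {β : Fin q → ℝ | ∀ i, |β i| ≤ ((L+1 : ℕ):ℝ)
          ∧ ∃ k : ℤ, |(n:ℕ) * β i - (k:ℝ)| < ((n:ℕ):ℝ) ^ (-b')}
          = Set.pi Set.univ (fun _ : Fin q => S) := by
        ext β; simp [hS, Set.mem_pi]
      rw [hset, volume_pi_pi]
      rcases Nat.eq_zero_or_pos n with hn | hn
      · -- n = 0 : the set S is empty
        have hSempty : S = ∅ := by
          ext x
          simp only [hS, hn, Set.mem_setOf_eq, Set.mem_empty_iff_false, iff_false, not_and]
          intro _
          rintro ⟨k, hk⟩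
          push_cast at hk
          rw [Real.zero_rpow (neg_ne_zero.mpr (ne_of_gt hb'pos)), zero_mul, zero_sub,
            abs_neg] at hk
          exact absurd hk (abs_nonneg _).not_gt
        rw [hSempty]
        simp only [measure_empty, Finset.prod_const, Finset.card_univ, Fintype.card_fin]
        rw [zero_pow (by omega : q ≠ 0)]
        exact zero_le
      · have hδ0 : (0:ℝ) ≤ ((n:ℕ):ℝ) ^ (-b') := Real.rpow_nonneg (Nat.cast_nonneg n) _
        have hδ1 : ((n:ℕ):ℝ) ^ (-b') ≤ 1 :=
          Real.rpow_le_one_of_one_le_of_nonpos (by exact_mod_cast hn) (by linarith)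
        have h1 := oneDim_bound n hn (L+1) (by omega) _ hδ0 hδ1
        calc (∏ _i : Fin q, volume S) ≤ ∏ _i : Fin q, ENNReal.ofReal (10 * ((L+1:ℕ):ℝ) * ((n:ℕ):ℝ) ^ (-b')) := by
              apply Finset.prod_le_prod' (fun i _ => h1)
          _ = ENNReal.ofReal ((10 * ((L+1:ℕ):ℝ) * ((n:ℕ):ℝ) ^ (-b')) ^ q) := by
              rw [Finset.prod_const, Finset.card_univ, Fintype.card_fin,
                ← ENNReal.ofReal_pow (by positivity)]
          _ ≤ ENNReal.ofReal ((10 * (L+1 : ℕ)) ^ q * ((n:ℝ) ^ (b' * q))⁻¹) := by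
              apply ENNReal.ofReal_le_ofReal
              rw [mul_pow]
              have : (((n:ℕ):ℝ) ^ (-b')) ^ q = ((n:ℝ) ^ (b' * q))⁻¹ := by
                rw [← Real.rpow_natCast (((n:ℕ):ℝ) ^ (-b')) q, ← Real.rpow_mul (Nat.cast_nonneg n),
                  ← Real.rpow_neg (Nat.cast_nonneg n), neg_mul]
              rw [this]
    -- summability
    have hsum : Summable (fun n : ℕ => (10 * ((L+1:ℕ)):ℝ) ^ q * ((n:ℝ) ^ (b' * q))⁻¹) := by
      apply Summable.mul_left
      exact Real.summable_nat_rpow_inv.mpr (mul_comm (q:ℝ) b' ▸ hb'q)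
    refine ne_top_of_le_ne_top ?_ (ENNReal.tsum_le_tsum hbd)
    rw [← ENNReal.ofReal_tsum_of_nonneg (fun n => by positivity) hsum]
    exact ENNReal.ofReal_ne_top
  have hae : ∀ᵐ β : Fin q → ℝ ∂volume, ∀ L : ℕ, ¬ (∃ᶠ n in atTop,
      ∀ i, |β i| ≤ ((L+1 : ℕ):ℝ) ∧ ∃ k : ℤ, |(n:ℕ) * β i - (k:ℝ)| < ((n:ℕ):ℝ) ^ (-b')) := by
    rw [ae_all_iff]
    intro L
    refine ae_iff.mpr ?_
    simpa only [not_not] using hzero L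
  filter_upwards [hae] with β hβ
  set L := ⌈∑ i, |β i|⌉₊ with hLdef
  have hLb : ∀ i, |β i| ≤ ((L+1:ℕ):ℝ) := by
    intro i
    have h1 : |β i| ≤ ∑ j, |β j| :=
      Finset.single_le_sum (fun j _ => abs_nonneg (β j)) (Finset.mem_univ i)
    have h2 := Nat.le_ceil (∑ j, |β j|)
    push_cast
    push_cast at h2
    linarith
  have hnot := hβ L
  rw [Filter.not_frequently] at hnot
  rw [Filter.eventually_atTop] at hnot
  obtain ⟨N₀, hN₀⟩ := hnot
  refine ⟨max N₀ 1, le_max_right _ _, ?_⟩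
  intro n hn
  have hm : ((n.natAbs:ℕ):ℝ) = |(n:ℝ)| := by
    simp [Nat.cast_natAbs, Int.cast_abs]
  have hge : N₀ ≤ n.natAbs := by
    have h3 : ((max N₀ 1 : ℕ):ℝ) ≤ ((n.natAbs:ℕ):ℝ) := by rw [hm]; exact hn
    have h4 : (max N₀ 1 : ℕ) ≤ n.natAbs := by exact_mod_cast h3
    omega
  have hnp := hN₀ n.natAbs hge
  push_neg at hnp
  obtain ⟨i, hi⟩ := hnp
  have hib := hi (hLb i)
  refine ⟨i, fun k => ?_⟩
  rw [← hm]
  rcases Int.natAbs_eq n with h | h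
  · have he : (n:ℝ) = ((n.natAbs:ℕ):ℝ) := by
      have h2 : ((n:ℤ):ℝ) = (((n.natAbs:ℤ)):ℝ) := by rw [← h]
      rwa [Int.cast_natCast] at h2
    rw [he]
    exact hib k
  · have he : (n:ℝ) = -((n.natAbs:ℕ):ℝ) := by
      have := congrArg (fun z : ℤ => (z : ℝ)) h
      push_cast at this
      exact_mod_cast this
    rw [he]
    have h5 := hib (-k)
    push_cast at h5 ⊢
    rw [show -((n.natAbs:ℕ):ℝ) * β i - (k:ℝ) = -(((n.natAbs:ℕ):ℝ) * β i - (-(k:ℝ))) by ring,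
      abs_neg]
    exact h5

noncomputable def shearEquiv (m : ℕ) : (Fin (m+1) → ℝ) ≃ₗ[ℝ] (Fin (m+1) → ℝ) where
  toFun U := fun i => if i = 0 then U 0 else U i - U 0
  map_add' U V := by funext i; by_cases h : i = 0 <;> simp [h] <;> ring
  map_smul' r U := by funext i; by_cases h : i = 0 <;> simp [h] <;> ring
  invFun V := fun i => if i = 0 then V 0 else V i + V 0
  left_inv U := by funext i; by_cases h : i = 0 <;> simp [h]
  right_inv V := by funext i; by_cases h : i = 0 <;> simp [h]

lemma ae_shear {m : ℕ} {P : (Fin (m+1) → ℝ) → Prop} (hP : ∀ᵐ V : Fin (m+1) → ℝ ∂volume, P V) :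
    ∀ᵐ U : Fin (m+1) → ℝ ∂volume, P (shearEquiv m U) := by
  have hdet : LinearMap.det (shearEquiv m).toLinearMap ≠ 0 :=
    (LinearEquiv.isUnit_det' (shearEquiv m)).ne_zero
  have hq := MeasureTheory.Measure.LinearMap.quasiMeasurePreserving
    (μ := (volume : Measure (Fin (m+1) → ℝ))) (shearEquiv m).toLinearMap hdet
  rw [ae_iff] at hP ⊢
  have h0 := hq.preimage_null hP
  exact measure_mono_null (fun U hU => hU) h0

lemma ae_tail {m : ℕ} {P : (Fin m → ℝ) → Prop} (hP : ∀ᵐ β : Fin m → ℝ ∂volume, P β) :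
    ∀ᵐ V : Fin (m+1) → ℝ ∂volume, P (fun j => V j.succ) := by
  set N := toMeasurable volume {β : Fin m → ℝ | ¬ P β} with hN
  have hNm : MeasurableSet N := measurableSet_toMeasurable _ _
  have hN0 : volume N = 0 := by
    rw [hN, measure_toMeasurable]; exact ae_iff.mp hP
  set e := MeasurableEquiv.piFinSuccAbove (fun _ : Fin (m+1) => ℝ) 0 with he
  have hmp := volume_preserving_piFinSuccAbove (fun _ : Fin (m+1) => ℝ) 0
  have hsub : {V : Fin (m+1) → ℝ | ¬ P (fun j => V j.succ)} ⊆ e ⁻¹' (Set.univ ×ˢ N) := by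
    intro V hV
    simp only [Set.mem_preimage, he, MeasurableEquiv.piFinSuccAbove_apply, Set.mem_prod,
      Set.mem_univ, true_and, Fin.zero_succAbove]
    exact subset_toMeasurable _ _ hV
  rw [ae_iff]
  refine measure_mono_null hsub ?_
  rw [hmp.measure_preimage_equiv, Measure.volume_eq_prod, Measure.prod_prod, hN0, mul_zero]

lemma ae_ne_zero {m : ℕ} : ∀ᵐ α : Fin (m+1) → ℝ ∂volume, α 0 ≠ 0 := by
  set e := MeasurableEquiv.piFinSuccAbove (fun _ : Fin (m+1) => ℝ) 0 with he
  have hmp := volume_preserving_piFinSuccAbove (fun _ : Fin (m+1) => ℝ) 0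
  rw [ae_iff]
  have hsub : {α : Fin (m+1) → ℝ | ¬ α 0 ≠ 0} ⊆ e ⁻¹' (({0} : Set ℝ) ×ˢ Set.univ) := by
    intro α hα
    simp only [Set.mem_setOf_eq, not_not] at hα
    simp [he, MeasurableEquiv.piFinSuccAbove_apply, hα]
  refine measure_mono_null hsub ?_
  rw [hmp.measure_preimage_equiv, Measure.volume_eq_prod, Measure.prod_prod,
    Real.volume_singleton, zero_mul]

lemma ae_ratio {m : ℕ} {P : (Fin m → ℝ) → Prop} (hP : ∀ᵐ β : Fin m → ℝ ∂volume, P β) :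
    ∀ᵐ α : Fin (m+1) → ℝ ∂volume, α 0 ≠ 0 → P (fun i => α i.succ / α 0) := by
  set N := toMeasurable volume {β : Fin m → ℝ | ¬ P β} with hN
  have hNm : MeasurableSet N := measurableSet_toMeasurable _ _
  have hN0 : volume N = 0 := by
    rw [hN, measure_toMeasurable]; exact ae_iff.mp hP
  set T : Set (ℝ × (Fin m → ℝ)) := {z | z.1 ≠ 0 ∧ (fun i => z.2 i / z.1) ∈ N} with hT
  have hTm : MeasurableSet T := by
    apply MeasurableSet.inter
    · exact (measurableSet_singleton (0:ℝ)).compl.preimage measurable_fst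
    · refine MeasurableSet.preimage hNm ?_
      exact measurable_pi_lambda _ fun i => ((measurable_pi_apply i).comp measurable_snd).div
        measurable_fst
  have hT0 : (volume.prod volume) T = 0 := by
    rw [Measure.measure_prod_null hTm]
    have hae : ∀ᵐ x : ℝ ∂volume, x ≠ 0 := by
      rw [ae_iff]
      simpa using Real.volume_singleton (x := 0)
    filter_upwards [hae] with x hx
    have hslice : (Prod.mk x ⁻¹' T) = (fun v : Fin m → ℝ => x⁻¹ • v) ⁻¹' N := by
      ext v
      simp only [hT, Set.mem_preimage, Set.mem_setOf_eq, hx, ne_eq, not_false_iff, true_and]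
      have : (fun i => v i / x) = x⁻¹ • v := by
        funext i; simp [Pi.smul_apply, smul_eq_mul, div_eq_inv_mul]
      rw [this]
    show (volume : Measure (Fin m → ℝ)) (Prod.mk x ⁻¹' T) = 0
    rw [hslice, Measure.addHaar_preimage_smul volume (inv_ne_zero hx), hN0, mul_zero]
  set e := MeasurableEquiv.piFinSuccAbove (fun _ : Fin (m+1) => ℝ) 0 with he
  have hmp := volume_preserving_piFinSuccAbove (fun _ : Fin (m+1) => ℝ) 0
  rw [ae_iff]
  have hsub : {α : Fin (m+1) → ℝ | ¬ (α 0 ≠ 0 → P (fun i => α i.succ / α 0))} ⊆ e ⁻¹' T := by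
    intro α hα
    rw [Set.mem_setOf_eq, Classical.not_imp] at hα
    simp only [Set.mem_preimage, he, MeasurableEquiv.piFinSuccAbove_apply, hT,
      Set.mem_setOf_eq, Fin.zero_succAbove]
    exact ⟨hα.1, subset_toMeasurable _ _ hα.2⟩
  refine measure_mono_null hsub ?_
  rw [hmp.measure_preimage_equiv, Measure.volume_eq_prod]
  exact hT0

lemma dioph_lift (q : ℕ) (b b' : ℝ) (hb'pos : 0 < b') (hb'b : b' < b)
    (α : Fin (q+1) → ℝ) (hα0 : α 0 ≠ 0) (N : ℕ) (hN : 1 ≤ N)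
    (hβ : ∀ n : ℤ, (N:ℝ) ≤ |(n:ℝ)| →
      ∃ i : Fin q, ∀ k : ℤ, |(n:ℝ)| ^ (-b') ≤ |(n:ℝ) * (α i.succ / α 0) - (k:ℝ)|) :
    ∃ R > (0:ℝ), ∀ t : ℝ, R < |t| → ∃ i : Fin (q+1), ∀ k : ℤ,
      1 / |t| ^ b ≤ |t * α i - 2*π*k| := by
  have hπ : (0:ℝ) < π := Real.pi_pos
  have hα0' : (0:ℝ) < |α 0| := abs_pos.mpr hα0
  obtain ⟨A, hA⟩ : ∃ x : ℝ, x = |α 0| / (2*π) + 1 := ⟨_, rfl⟩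
  have hA1 : (1:ℝ) ≤ A := by
    have : 0 ≤ |α 0| / (2*π) := by positivity
    rw [hA]; linarith
  obtain ⟨B, hB⟩ : ∃ x : ℝ, x = 1 + ∑ i : Fin q, |α i.succ / α 0| := ⟨_, rfl⟩
  have hB1 : (1:ℝ) ≤ B := by
    have : 0 ≤ ∑ i : Fin q, |α i.succ / α 0| := Finset.sum_nonneg fun i _ => abs_nonneg _
    rw [hB]; linarith
  have hBbound : ∀ i : Fin q, |α i.succ / α 0| ≤ B := by
    intro i
    have h1 : |α i.succ / α 0| ≤ ∑ j : Fin q, |α j.succ / α 0| :=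
      Finset.single_le_sum (f := fun j : Fin q => |α j.succ / α 0|)
        (fun j _ => abs_nonneg _) (Finset.mem_univ i)
    rw [hB]; linarith
  obtain ⟨R, hR⟩ : ∃ x : ℝ,
      x = max (max 1 (2*π*(N+1)/|α 0|)) ((A ^ b' * (B+1) / (2*π)) ^ (1/(b-b'))) := ⟨_, rfl⟩
  have hRge1 : (1:ℝ) ≤ R := by rw [hR]; exact (le_max_left _ _).trans (le_max_left _ _)
  have hRge2 : 2*π*(N+1)/|α 0| ≤ R := by rw [hR]; exact (le_max_right _ _).trans (le_max_left _ _)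
  have hRge3 : (A ^ b' * (B+1) / (2*π)) ^ (1/(b-b')) ≤ R := by rw [hR]; exact le_max_right _ _
  refine ⟨R, lt_of_lt_of_le one_pos hRge1, ?_⟩
  intro t ht
  have ht1 : (1:ℝ) < |t| := lt_of_le_of_lt hRge1 ht
  have ht0 : (0:ℝ) < |t| := by linarith
  have htb : (1:ℝ) ≤ |t| ^ b := Real.one_le_rpow ht1.le (by linarith)
  have htbpos : (0:ℝ) < |t| ^ b := Real.rpow_pos_of_pos ht0 b
  have hdb : (0:ℝ) < 1 / |t| ^ b := by positivity
  have hdb1 : 1 / |t| ^ b ≤ 1 := by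
    rw [div_le_one htbpos]; exact htb
  -- the nearest multiple of 2π to t * α 0
  set n : ℤ := round (t * α 0 / (2*π)) with hn
  set θ : ℝ := t * α 0 - 2*π*n with hθ
  have hθπ : |θ| ≤ π := by
    have h2 := abs_sub_round (t * α 0 / (2*π))
    have e1 : θ = (2*π) * (t * α 0 / (2*π) - n) := by
      rw [hθ]; field_simp
    rw [e1, abs_mul, abs_of_pos (by positivity : (0:ℝ) < 2*π)]
    nlinarith [abs_nonneg (t * α 0 / (2*π) - n)]
  by_cases hcase : 1 / |t| ^ b ≤ |θ|
  · -- case A : use i = 0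
    refine ⟨0, fun k => ?_⟩
    by_cases hk : k = n
    · rw [hk]; exact hcase
    · have h3 : (1:ℝ) ≤ |(n:ℝ) - (k:ℝ)| := by
        have hnk : n - k ≠ 0 := sub_ne_zero.mpr (fun h => hk h.symm)
        have h4 : (1:ℤ) ≤ |n - k| := Int.one_le_abs hnk
        have h5 : ((1:ℤ):ℝ) ≤ (|n - k| : ℤ) := by exact_mod_cast h4
        rw [Int.cast_abs] at h5
        push_cast at h5 ⊢
        linarith
      have e2 : t * α 0 - 2*π*k = θ + 2*π*((n:ℝ) - k) := by rw [hθ]; ring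
      rw [e2]
      have habs : |2*π*((n:ℝ) - k)| = 2*π*|(n:ℝ) - k| := by
        rw [abs_mul, abs_of_pos (by positivity : (0:ℝ) < 2*π)]
      have h6 : 2*π*|(n:ℝ) - k| - |θ| ≤ |θ + 2*π*((n:ℝ) - k)| := by
        have h7 := abs_add_le (θ + 2*π*((n:ℝ) - k)) (-θ)
        rw [add_neg_cancel_comm, abs_neg, habs] at h7
        linarith
      have hπb : (1:ℝ)/|t|^b ≤ π := le_trans hdb1 (by linarith [Real.pi_gt_three])
      have h8 : 2*π*1 ≤ 2*π*|(n:ℝ) - k| :=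
        mul_le_mul_of_nonneg_left h3 (by positivity)
      linarith
  · -- case B : use the Diophantine property of the ratios
    push_neg at hcase
    have hNbound : (N:ℝ) ≤ |(n:ℝ)| := by
      have h8 : 2*π*(N+1)/|α 0| < |t| := lt_of_le_of_lt hRge2 ht
      have h9 : 2*π*(N+1) < |t| * |α 0| := by
        rw [div_lt_iff₀ hα0'] at h8; linarith
      have h10 : |t * α 0| ≤ 2*π*|(n:ℝ)| + π := by
        have : |t * α 0| - |2*π*(n:ℝ)| ≤ |θ| := by
          calc |t * α 0| - |2*π*(n:ℝ)| ≤ |t * α 0 - 2*π*(n:ℝ)| := abs_sub_abs_le_abs_sub _ _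
          _ = |θ| := by rw [hθ]
        have habs2 : |2*π*(n:ℝ)| = 2*π*|(n:ℝ)| := by
          rw [abs_mul, abs_of_pos (by positivity : (0:ℝ) < 2*π)]
        linarith [hθπ]
      rw [abs_mul] at h10
      have h13 : 2*π*(N:ℝ) < 2*π*|(n:ℝ)| := by linarith
      have h14 := (mul_lt_mul_iff_right₀ (by positivity : (0:ℝ) < 2*π)).mp h13
      linarith
    obtain ⟨i, hi⟩ := hβ n hNbound
    refine ⟨i.succ, fun k => ?_⟩
    set β : ℝ := α i.succ / α 0 with hβi
    have hαi : α i.succ = β * α 0 := by rw [hβi]; field_simp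
    have e3 : t * α i.succ - 2*π*k = 2*π*((n:ℝ)*β - k) + θ*β := by
      rw [hαi, hθ]; ring
    -- lower bound |n|^{-b'}
    have hnpos : (0:ℝ) < |(n:ℝ)| := by
      have : (1:ℝ) ≤ (N:ℝ) := by exact_mod_cast hN
      linarith
    have hnupper : |(n:ℝ)| ≤ A * |t| := by
      have h10 : 2*π*|(n:ℝ)| ≤ |t * α 0| + π := by
        have : |2*π*(n:ℝ)| - |t * α 0| ≤ |θ| := by
          calc |2*π*(n:ℝ)| - |t * α 0| ≤ |2*π*(n:ℝ) - t * α 0| := abs_sub_abs_le_abs_sub _ _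
          _ = |θ| := by rw [hθ, ← abs_neg]; ring_nf
        have habs2 : |2*π*(n:ℝ)| = 2*π*|(n:ℝ)| := by
          rw [abs_mul, abs_of_pos (by positivity : (0:ℝ) < 2*π)]
        linarith [hθπ]
      rw [abs_mul] at h10
      have hπle : π ≤ π * |t| := by
        have h15 := mul_le_mul_of_nonneg_left ht1.le hπ.le
        linarith
      have h16 : 2*π*|(n:ℝ)| ≤ |t| * |α 0| + 2*π*|t| := by linarith
      rw [hA]
      have h12 : (|α 0| / (2*π) + 1) * |t| = (|t| * |α 0| + 2*π*|t|)/(2*π) := by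
        field_simp
      rw [h12, le_div_iff₀ (by positivity : (0:ℝ) < 2*π)]
      linarith
    have hlow : (A * |t|) ^ (-b') ≤ |(n:ℝ)| ^ (-b') :=
      Real.rpow_le_rpow_of_nonpos hnpos hnupper (by linarith)
    have hmul : (A * |t|) ^ (-b') = A ^ (-b') * |t| ^ (-b') :=
      Real.mul_rpow (by linarith) (abs_nonneg t)
    -- the main estimate
    have hkey : 2*π * (A ^ (-b') * |t| ^ (-b')) - B * (1/|t|^b) ≥ 1/|t|^b := by
      have hRX : (A ^ b' * (B+1) / (2*π)) ^ (1/(b-b')) ≤ R := hRge3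
      have hX : A ^ b' * (B+1) / (2*π) ≤ |t| ^ (b - b') := by
        have hXpos : (0:ℝ) < A ^ b' * (B+1) / (2*π) := by
          have := Real.rpow_pos_of_pos (by linarith : (0:ℝ) < A) b'
          positivity
        have h12 : ((A ^ b' * (B+1) / (2*π)) ^ (1/(b-b'))) ^ (b - b')
            = A ^ b' * (B+1) / (2*π) := by
          rw [← Real.rpow_mul hXpos.le, one_div_mul_cancel (by linarith : b - b' ≠ 0),
            Real.rpow_one]
        calc A ^ b' * (B+1) / (2*π) = ((A ^ b' * (B+1) / (2*π)) ^ (1/(b-b'))) ^ (b - b') :=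
              h12.symm
        _ ≤ R ^ (b - b') := by
              apply Real.rpow_le_rpow (Real.rpow_nonneg hXpos.le _) hRX (by linarith)
        _ ≤ |t| ^ (b - b') := by
              apply Real.rpow_le_rpow (by positivity) ht.le (by linarith)
      -- multiply out
      have hApos : (0:ℝ) < A ^ b' := Real.rpow_pos_of_pos (by linarith) b'
      have hAneg : A ^ (-b') = (A ^ b')⁻¹ := Real.rpow_neg (by linarith) b'
      have htneg : |t| ^ (-b') = |t| ^ (b - b') * (|t| ^ b)⁻¹ := by
        rw [← Real.rpow_neg ht0.le, ← Real.rpow_add ht0]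
        congr 1; ring
      rw [hAneg, htneg]
      have h13 : A ^ b' * (B+1) / (2*π) * (2*π*(A ^ b')⁻¹) ≤ |t| ^ (b-b') * (2*π*(A ^ b')⁻¹) := by
        apply mul_le_mul_of_nonneg_right hX (by positivity)
      have h14 : A ^ b' * (B+1) / (2*π) * (2*π*(A ^ b')⁻¹) = B + 1 := by
        field_simp
      rw [h14] at h13
      have h15 : 2*π*((A^b')⁻¹ * (|t|^(b-b') * (|t|^b)⁻¹)) 
          = (|t|^(b-b') * (2*π*(A^b')⁻¹)) * (|t|^b)⁻¹ := by ring
      rw [ge_iff_le, h15]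
      have h16 : (B+1) * (|t|^b)⁻¹ ≤ (|t|^(b-b') * (2*π*(A ^ b')⁻¹)) * (|t|^b)⁻¹ := by
        apply mul_le_mul_of_nonneg_right h13 (by positivity)
      have h17 : 1/|t|^b + B * (1/|t|^b) = (B+1) * (|t|^b)⁻¹ := by
        field_simp; ring
      linarith
    -- conclude
    have hθβ : |θ * β| ≤ (1/|t|^b) * B := by
      rw [abs_mul]
      apply mul_le_mul hcase.le (hBbound i) (abs_nonneg _) hdb.le
    have h18 := hi k
    have h19 : 2*π*((A ^ (-b')) * |t| ^ (-b')) ≤ 2*π*|(n:ℝ)*β - (k:ℝ)| := by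
      have h20 : (A ^ (-b')) * |t| ^ (-b') ≤ |(n:ℝ)*β - (k:ℝ)| :=
        le_trans (by rw [← hmul]; exact hlow) h18
      exact mul_le_mul_of_nonneg_left h20 (by positivity)
    rw [e3]
    have h21 : |2*π*((n:ℝ)*β - k) + θ*β| ≥ |2*π*((n:ℝ)*β - k)| - |θ*β| := by
      have h22 := abs_add_le (2*π*((n:ℝ)*β - k) + θ*β) (-(θ*β))
      simp only [add_neg_cancel_right, abs_neg] at h22
      linarith
    have habs3 : |2*π*((n:ℝ)*β - k)| = 2*π*|(n:ℝ)*β - k| := by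
      rw [abs_mul, abs_of_pos (by positivity : (0:ℝ) < 2*π)]
    rw [habs3] at h21
    linarith [h19, h21, hθβ, hkey]

lemma integral_char (m : ℕ) (c U : Fin m → ℝ) (hc : ∀ i, 0 < c i) (t : ℝ) :
    ∫ x, Complex.exp (t * x * Complex.I) ∂(∑ i, ENNReal.ofReal (c i) • Measure.dirac (U i))
      = ∑ i, (c i : ℂ) * Complex.exp (t * U i * Complex.I) := by
  have hcont : Continuous fun x : ℝ => Complex.exp (t * x * Complex.I) := by
    apply Complex.continuous_exp.comp
    exact ((continuous_const.mul Complex.continuous_ofReal).mul continuous_const)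
  have hnorm : ∀ x : ℝ, ‖Complex.exp (t * x * Complex.I)‖ = 1 := by
    intro x
    rw [Complex.norm_exp]
    have : (↑t * ↑x * Complex.I).re = 0 := by simp
    rw [this, Real.exp_zero]
  have hint : ∀ i ∈ Finset.univ, Integrable (fun x : ℝ => Complex.exp (t * x * Complex.I))
      (ENNReal.ofReal (c i) • Measure.dirac (U i)) := by
    intro i _
    rw [integrable_smul_measure
      (fun h => absurd (ENNReal.ofReal_eq_zero.mp h) (not_le.mpr (hc i)))
      ENNReal.ofReal_ne_top]
    apply Integrable.mono' (integrable_const (1:ℝ)) hcont.aestronglyMeasurable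
    exact ae_of_all _ fun x => le_of_eq (hnorm x)
  rw [integral_finset_sum_measure hint]
  refine Finset.sum_congr rfl fun i _ => ?_
  rw [integral_smul_measure, integral_dirac, ENNReal.toReal_ofReal (hc i).le,
    Complex.real_smul]

@[simp] lemma shearEquiv_apply (m : ℕ) (U : Fin (m+1) → ℝ) (i : Fin (m+1)) :
    shearEquiv m U i = if i = 0 then U 0 else U i - U 0 := rfl

lemma ae_dioph_alpha (q : ℕ) (hq : 1 ≤ q) (b b' : ℝ) (hb'pos : 0 < b')
    (hb'q : 1 < q * b') (hb'b : b' < b) :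
    ∀ᵐ α : Fin (q+1) → ℝ ∂volume, α 0 ≠ 0 ∧ (α 0 ≠ 0 →
      ∃ R > (0:ℝ), ∀ t : ℝ, R < |t| → ∃ i : Fin (q+1), ∀ k : ℤ,
        1 / |t| ^ b ≤ |t * α i - 2*π*k|) := by
  have h1 := ae_ratio (m := q) (ae_dioph_beta q hq b' hb'pos hb'q)
  filter_upwards [h1, ae_ne_zero (m := q)] with α hrat hne
  refine ⟨hne, fun hα0 => ?_⟩
  obtain ⟨N, hN1, hNprop⟩ := hrat hα0
  exact dioph_lift q b b' hb'pos hb'b α hα0 N hN1 (fun n hn => hNprop n hn)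

/-- Genericity of the weak Cramer condition: for `p ≥ 3` and `b > 1/(p-2)`,
for Lebesgue-almost every `U ∈ ℝ^p`, every probability measure `∑ cᵢ δ_{Uᵢ}`
with positive weights belongs to the class `C(1,2b)`. -/
theorem statement3
    (p : ℕ) (hp : 3 ≤ p) (b : ℝ) (hb : 1 / ((p : ℝ) - 2) < b) :
    ∀ᵐ U : Fin p → ℝ ∂volume,
      ∀ c : Fin p → ℝ, (∀ i, 0 < c i) → ∑ i, c i = 1 →
        memC1 (∑ i, ENNReal.ofReal (c i) • Measure.dirac (U i)) (2 * b) := by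
  obtain ⟨q, rfl⟩ : ∃ q, p = q + 3 := ⟨p - 3, by omega⟩
  have hπ : (0:ℝ) < π := Real.pi_pos
  have hQcast : ((q:ℝ) + 3) - 2 = ((q+1 : ℕ) : ℝ) := by push_cast; ring
  have hbQ : 1 / ((q+1 : ℕ) : ℝ) < b := by
    have : ((q + 3 : ℕ) : ℝ) - 2 = ((q+1 : ℕ) : ℝ) := by push_cast; ring
    rwa [this] at hb
  have hQpos : (0:ℝ) < ((q+1 : ℕ) : ℝ) := by positivity
  have hbpos : 0 < b := lt_trans (by positivity) hbQ
  set b' : ℝ := (1 / ((q+1 : ℕ) : ℝ) + b) / 2 with hb'def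
  have hb'pos : 0 < b' := by rw [hb'def]; positivity
  have hb'b : b' < b := by rw [hb'def]; linarith
  have hb'q : 1 < ((q+1 : ℕ) : ℝ) * b' := by
    have h1 : ((q+1 : ℕ) : ℝ) * (1 / ((q+1 : ℕ) : ℝ)) = 1 := by
      field_simp
    have h2 : ((q+1 : ℕ) : ℝ) * (1 / ((q+1 : ℕ) : ℝ)) < ((q+1 : ℕ) : ℝ) * b :=
      mul_lt_mul_of_pos_left hbQ hQpos
    rw [hb'def]
    rw [h1] at h2
    have : ((q+1 : ℕ) : ℝ) * ((1 / ((q+1 : ℕ) : ℝ) + b) / 2)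
        = (((q+1 : ℕ) : ℝ) * (1 / ((q+1 : ℕ) : ℝ)) + ((q+1 : ℕ) : ℝ) * b) / 2 := by ring
    rw [this, h1]
    linarith
  have hαq := ae_dioph_alpha (q+1) (by omega) b b' hb'pos hb'q hb'b
  have hV := ae_tail (m := q+2) hαq
  have hU := ae_shear (m := q+2) hV
  filter_upwards [hU] with U hUprop c hc hcsum
  simp only [shearEquiv_apply, Fin.succ_ne_zero, if_false] at hUprop
  obtain ⟨hne, hrest⟩ := hUprop
  obtain ⟨R, hRpos, hdioph⟩ := hrest hne
  -- the constant
  have huniv : (Finset.univ : Finset (Fin (q+3))).Nonempty := ⟨0, Finset.mem_univ 0⟩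
  set m0 : ℝ := Finset.univ.inf' huniv c with hm0
  have hm0pos : 0 < m0 := by
    rw [hm0, Finset.lt_inf'_iff]
    exact fun i _ => hc i
  have hm0le : ∀ i, m0 ≤ c i := fun i => Finset.inf'_le _ (Finset.mem_univ i)
  refine ⟨2 * m0^2 / π^2, by positivity, max R 1, lt_of_lt_of_le one_pos (le_max_right _ _),
    fun t ht => ?_⟩
  have htR : R < |t| := lt_of_le_of_lt (le_max_left _ _) ht
  have ht1 : (1:ℝ) < |t| := lt_of_le_of_lt (le_max_right _ _) ht
  have ht0 : (0:ℝ) < |t| := by linarith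
  have htbpos : (0:ℝ) < |t| ^ b := Real.rpow_pos_of_pos ht0 b
  obtain ⟨i, hk⟩ := hdioph t htR
  have hcos := one_sub_cos_lb (t * (U i.succ - U 0)) (1 / |t| ^ b) (by positivity) hk
  have hnorm := norm_char_le (q+2) c U hc hcsum t i
  rw [integral_char (q+3) c U hc t]
  refine le_trans hnorm ?_
  have hts : |t| ^ (2*b) = (|t|^b)^2 := by
    rw [show (2*b) = b*2 by ring, Real.rpow_mul (abs_nonneg t), ← Real.rpow_natCast (|t|^b) 2]
    norm_num
  have hprod : m0^2 * (2 * ((1 / |t| ^ b) / π)^2) ≤ (c 0 * c i.succ) *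
      (1 - Real.cos (t * (U i.succ - U 0))) := by
    apply mul_le_mul ?_ hcos (by positivity) (mul_nonneg (hc 0).le (hc i.succ).le)
    calc m0^2 = m0 * m0 := sq m0
    _ ≤ c 0 * c i.succ := mul_le_mul (hm0le 0) (hm0le i.succ) hm0pos.le (hc 0).le
  have heq : 2 * m0^2 / π^2 / |t| ^ (2*b) = m0^2 * (2 * ((1 / |t| ^ b) / π)^2) := by
    rw [hts]
    field_simp
  rw [heq]
  linarith [hprod]
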